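/- Define μ'_k = ∏_p (1 − 1/p + (1/p)(1 − 1/p)^{−k}), the product over all primes (the k-th moment of N/φ(N)). Then log μ'_k ≪ k·log log k for k ≥ 3. -/

import Mathlib

open Finset Real

/-- Primes in `[2^j, 2^(j+1))` are few: `j * card ≤ 2^(j+2)`. -/
lemma block_card_le (j : ℕ) :
    j * ((Nat.primesBelow (2^(j+1))) \ (Nat.primesBelow (2^j))).card ≤ 2^(j+2) := by
  set B := (Nat.primesBelow (2^(j+1))) \ (Nat.primesBelow (2^j)) with hB
  have hmem : ∀ p ∈ B, 2^j ≤ p ∧ p < 2^(j+1) ∧ p.Prime := by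
    intro p hp
    rcases Finset.mem_sdiff.mp hp with ⟨hp1, hp2⟩
    have hpp := Nat.prime_of_mem_primesBelow hp1
    refine ⟨?_, Nat.lt_of_mem_primesBelow hp1, hpp⟩
    by_contra h
    push_neg at h
    exact hp2 (Nat.mem_primesBelow.mpr ⟨h, hpp⟩)
  have h1 : (2^j) ^ B.card ≤ ∏ p ∈ B, p :=
    Finset.pow_card_le_prod _ _ _ (fun p hp => (hmem p hp).1)
  have h2 : ∏ p ∈ B, p ≤ ∏ p ∈ Nat.primesBelow (2^(j+1)), p := by
    apply Finset.prod_le_prod_of_subset_of_one_le' (Finset.sdiff_subset)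
    intro i hi _
    exact (Nat.prime_of_mem_primesBelow hi).one_lt.le
  have h3 : ∏ p ∈ Nat.primesBelow (2^(j+1)), p ≤ 4 ^ (2^(j+1)) := by
    have : Nat.primesBelow (2^(j+1)) ⊆ Finset.filter Nat.Prime (Finset.range (2^(j+1) - 1 + 1)) := by
      intro p hp
      rw [Nat.mem_primesBelow] at hp
      refine Finset.mem_filter.mpr ⟨Finset.mem_range.mpr ?_, hp.2⟩
      omega
    calc ∏ p ∈ Nat.primesBelow (2^(j+1)), p
        ≤ ∏ p ∈ Finset.filter Nat.Prime (Finset.range (2^(j+1) - 1 + 1)), p := by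
          apply Finset.prod_le_prod_of_subset_of_one_le' this
          intro i hi _
          exact (Nat.prime_of_mem_primesBelow hi).one_lt.le
      _ = primorial (2^(j+1) - 1) := by rw [primorial]
      _ ≤ 4 ^ (2^(j+1) - 1) := primorial_le_4_pow _
      _ ≤ 4 ^ (2^(j+1)) := Nat.pow_le_pow_right (by norm_num) (Nat.sub_le _ _)
  have h4 : (2:ℕ) ^ (j * B.card) ≤ 2 ^ (2^(j+2)) := by
    calc (2:ℕ) ^ (j * B.card) = (2^j) ^ B.card := by rw [pow_mul]
      _ ≤ 4 ^ (2^(j+1)) := le_trans h1 (le_trans h2 h3)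
      _ = 2 ^ (2^(j+2)) := by
          rw [show (4:ℕ) = 2^2 by norm_num, ← pow_mul]
          congr 1
          ring
  exact (Nat.pow_le_pow_iff_right (by norm_num)).mp h4

/-- The sum of `1/p` over primes in `[2^j, 2^(j+1))` is at most `4/j`. -/
lemma block_sum_le (j : ℕ) (hj : 1 ≤ j) :
    ∑ p ∈ (Nat.primesBelow (2^(j+1))) \ (Nat.primesBelow (2^j)), (1:ℝ)/p ≤ 4 / j := by
  set B := (Nat.primesBelow (2^(j+1))) \ (Nat.primesBelow (2^j)) with hB
  have hmem : ∀ p ∈ B, 2^j ≤ p := by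
    intro p hp
    rcases Finset.mem_sdiff.mp hp with ⟨hp1, hp2⟩
    have hpp := Nat.prime_of_mem_primesBelow hp1
    by_contra h
    push_neg at h
    exact hp2 (Nat.mem_primesBelow.mpr ⟨h, hpp⟩)
  have hj0 : (0:ℝ) < j := by exact_mod_cast hj
  have h2j : (0:ℝ) < 2^j := by positivity
  have hcard : (j:ℝ) * B.card ≤ 2^(j+2) := by exact_mod_cast block_card_le j
  calc ∑ p ∈ B, (1:ℝ)/p ≤ ∑ _p ∈ B, (1:ℝ)/2^j := by
        apply Finset.sum_le_sum
        intro p hp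
        have h1 : (2:ℝ)^j ≤ p := by exact_mod_cast hmem p hp
        exact one_div_le_one_div_of_le h2j h1
    _ = B.card * (1/2^j) := by rw [Finset.sum_const, nsmul_eq_mul]
    _ ≤ (2^(j+2)/j) * (1/2^j) := by
        apply mul_le_mul_of_nonneg_right _ (by positivity)
        rw [le_div_iff₀ hj0]
        linarith [hcard]
    _ = 4 / j := by
        field_simp
        ring
  
/-- Mertens-type upper bound from the primorial bound. -/
lemma mertens_le (k : ℕ) (hk : 2 ≤ k) :
    ∑ p ∈ Nat.primesBelow (k+1), (1:ℝ)/p ≤ 4 * (1 + Real.log (Nat.log 2 k)) := by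
  set J := Nat.log 2 k with hJ
  have hJ1 : 1 ≤ J := Nat.log_pos one_lt_two hk
  set block : ℕ → Finset ℕ := fun j => (Nat.primesBelow (2^(j+1))) \ (Nat.primesBelow (2^j))
    with hblock
  have hsub : Nat.primesBelow (k+1) ⊆ (Finset.Icc 1 J).biUnion block := by
    intro p hp
    have hp' := Nat.prime_of_mem_primesBelow hp
    have hpk : p ≤ k := Nat.lt_succ_iff.mp (Nat.lt_of_mem_primesBelow hp)
    refine Finset.mem_biUnion.mpr ⟨Nat.log 2 p, ?_, ?_⟩
    · exact Finset.mem_Icc.mpr ⟨Nat.log_pos one_lt_two hp'.two_le, Nat.log_mono_right hpk⟩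
    · refine Finset.mem_sdiff.mpr ⟨Nat.mem_primesBelow.mpr
        ⟨Nat.lt_pow_succ_log_self one_lt_two p, hp'⟩, fun hmem => ?_⟩
      exact absurd (Nat.lt_of_mem_primesBelow hmem)
        (not_lt.mpr (Nat.pow_log_le_self 2 hp'.pos.ne'))
  have hdisj : (↑(Finset.Icc 1 J) : Set ℕ).PairwiseDisjoint block := by
    intro i _ j _ hij
    apply Finset.disjoint_left.mpr
    intro p hpi hpj
    rcases Finset.mem_sdiff.mp hpi with ⟨hi1, _⟩
    rcases Finset.mem_sdiff.mp hpj with ⟨hj1, _⟩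
    have keylt : ∀ a b : ℕ, a < b → p ∈ block a → p ∈ block b → False := by
      intro a b hab hpa hpb
      rcases Finset.mem_sdiff.mp hpa with ⟨ha1, _⟩
      rcases Finset.mem_sdiff.mp hpb with ⟨_, hb2⟩
      apply hb2
      refine Nat.mem_primesBelow.mpr ⟨?_, Nat.prime_of_mem_primesBelow ha1⟩
      calc p < 2^(a+1) := Nat.lt_of_mem_primesBelow ha1
        _ ≤ 2^b := Nat.pow_le_pow_right (by norm_num) hab
    rcases lt_or_gt_of_ne hij with h | h
    · exact keylt i j h hpi hpj
    · exact keylt j i h hpj hpi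
  have hnn : ∀ p ∈ (Finset.Icc 1 J).biUnion block, p ∉ Nat.primesBelow (k+1) →
      (0:ℝ) ≤ 1/p := fun p _ _ => by positivity
  calc ∑ p ∈ Nat.primesBelow (k+1), (1:ℝ)/p
      ≤ ∑ p ∈ (Finset.Icc 1 J).biUnion block, (1:ℝ)/p :=
        Finset.sum_le_sum_of_subset_of_nonneg hsub hnn
    _ = ∑ j ∈ Finset.Icc 1 J, ∑ p ∈ block j, (1:ℝ)/p := Finset.sum_biUnion hdisj
    _ ≤ ∑ j ∈ Finset.Icc 1 J, (4:ℝ)/j := by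
        apply Finset.sum_le_sum
        intro j hj
        exact block_sum_le j (Finset.mem_Icc.mp hj).1
    _ = 4 * (harmonic J : ℝ) := by
        rw [harmonic_eq_sum_Icc]
        push_cast
        rw [Finset.mul_sum]
        apply Finset.sum_congr rfl
        intro i _
        rw [div_eq_mul_inv]
    _ ≤ 4 * (1 + Real.log J) := by
        have := harmonic_le_one_add_log J
        linarith
  
/-- Pointwise bound `1/(1-x) ≤ exp (2x)` for `0 ≤ x ≤ 1/2`. -/
lemma inv_one_sub_le_exp {x : ℝ} (h0 : 0 ≤ x) (h2 : x ≤ 1/2) :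
    (1 - x)⁻¹ ≤ Real.exp (2*x) := by
  have hx1 : (0:ℝ) < 1 - x := by linarith
  rw [inv_eq_one_div, div_le_iff₀ hx1]
  nlinarith [Real.add_one_le_exp (2*x), Real.exp_pos (2*x)]

lemma zpow_neg_eq {x : ℝ} (hx : x ≠ 0) (k : ℕ) : x ^ (-(k:ℤ)) = (x^k)⁻¹ := by
  rw [zpow_neg, zpow_natCast]

/-- The Euler factor is at most `exp (2kx)`. -/
lemma factor_le_exp {x : ℝ} (k : ℕ) (h0 : 0 < x) (h2 : x ≤ 1/2) :
    1 - x + x * (1-x) ^ (-(k:ℤ)) ≤ Real.exp (2*k*x) := by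
  have hx1 : (0:ℝ) < 1 - x := by linarith
  have hA : (1-x) ^ (-(k:ℤ)) ≤ Real.exp (2*k*x) := by
    rw [zpow_neg_eq hx1.ne' k, ← inv_pow]
    calc ((1-x)⁻¹)^k ≤ (Real.exp (2*x))^k :=
          pow_le_pow_left₀ (by positivity) (inv_one_sub_le_exp h0.le h2) k
      _ = Real.exp (2*k*x) := by rw [← Real.exp_nat_mul]; ring_nf
  have hek : 1 ≤ Real.exp (2*k*x) := Real.one_le_exp (by positivity)
  nlinarith [hA, hek, h0.le, hx1.le]

/-- Sharper bound for large primes: factor ≤ `exp (e² k x²)` when `kx ≤ 1`. -/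
lemma factor_le_exp' {x : ℝ} (k : ℕ) (h0 : 0 < x) (h2 : x ≤ 1/2) (hkx : (k:ℝ)*x ≤ 1) :
    1 - x + x * (1-x) ^ (-(k:ℤ)) ≤ Real.exp (Real.exp 2 * k * x^2) := by
  have hx1 : (0:ℝ) < 1 - x := by linarith
  have hA2 : (1-x) ^ (-(k:ℤ)) ≤ Real.exp 2 := by
    calc (1-x) ^ (-(k:ℤ)) ≤ Real.exp (2*k*x) := by
          rw [zpow_neg_eq hx1.ne' k, ← inv_pow]
          calc ((1-x)⁻¹)^k ≤ (Real.exp (2*x))^k :=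
                pow_le_pow_left₀ (by positivity) (inv_one_sub_le_exp h0.le h2) k
            _ = Real.exp (2*k*x) := by rw [← Real.exp_nat_mul]; ring_nf
      _ ≤ Real.exp 2 := Real.exp_le_exp.mpr (by nlinarith)
  have hbern : 1 - (k:ℝ)*x ≤ (1-x)^k := by
    have := one_add_mul_le_pow (by linarith : (-2:ℝ) ≤ -x) k
    calc 1 - (k:ℝ)*x = 1 + (k:ℝ)*(-x) := by ring
      _ ≤ (1 + -x)^k := this
      _ = (1-x)^k := by ring_nf
  have hyk : (0:ℝ) < (1-x)^k := by positivity
  have hyk1 : (1-x)^k ≤ 1 := pow_le_one₀ hx1.le (by linarith)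
  have hAval : (1-x) ^ (-(k:ℤ)) = ((1-x)^k)⁻¹ := zpow_neg_eq hx1.ne' k
  set A := (1-x) ^ (-(k:ℤ)) with hAdef
  have hAy : A * (1-x)^k = 1 := by rw [hAval]; field_simp
  have hA1 : 1 ≤ A := by
    rw [hAval]
    exact (one_le_inv₀ hyk).mpr hyk1
  have hstep : A - 1 ≤ Real.exp 2 * ((k:ℝ)*x) := by
    have h1 : A - 1 = A * (1 - (1-x)^k) := by
      rw [mul_sub, hAy]; ring
    rw [h1]
    have h2 : 1 - (1-x)^k ≤ (k:ℝ)*x := by linarith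
    have h3 : 0 ≤ 1 - (1-x)^k := by linarith
    calc A * (1 - (1-x)^k) ≤ Real.exp 2 * (1 - (1-x)^k) :=
          mul_le_mul_of_nonneg_right hA2 h3
      _ ≤ Real.exp 2 * ((k:ℝ)*x) :=
          mul_le_mul_of_nonneg_left h2 (Real.exp_pos 2).le
  have hfinal : 1 - x + x * A ≤ 1 + Real.exp 2 * (k:ℝ) * x^2 := by nlinarith [h0.le]
  calc 1 - x + x * A ≤ 1 + Real.exp 2 * (k:ℝ) * x^2 := hfinal
    _ ≤ Real.exp (Real.exp 2 * k * x^2) := by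
        have := Real.add_one_le_exp (Real.exp 2 * (k:ℝ) * x^2)
        linarith

/-- `μ'_k = ∏_p (1 - 1/p + (1/p)(1 - 1/p)^{-k})`, the `k`-th moment of `N/φ(N)`. -/
noncomputable def mu' (k : ℕ) : ℝ :=
  ∏' p : Nat.Primes,
    (1 - 1/((p:ℕ):ℝ) + (1/((p:ℕ):ℝ)) * (1 - 1/((p:ℕ):ℝ)) ^ (-(k:ℤ)))

theorem stmt_15 :
    ∃ C : ℝ, ∀ k : ℕ, 3 ≤ k →
      Real.log (mu' k) ≤ C * k * Real.log (Real.log k) := by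
  set D : ℝ := -Real.log (Real.log 2) with hD
  set L₀ : ℝ := Real.log (Real.log 3) with hL₀
  have hD0 : 0 ≤ D := by
    rw [hD, neg_nonneg]
    apply (Real.log_neg (Real.log_pos (by norm_num)) ?_).le
    calc Real.log 2 < 0.6931471808 := Real.log_two_lt_d9
      _ < 1 := by norm_num
  have hL₀pos : 0 < L₀ := by
    apply Real.log_pos
    rw [show (1:ℝ) = Real.log (Real.exp 1) by rw [Real.log_exp]]
    apply Real.log_lt_log (Real.exp_pos 1)
    calc Real.exp 1 < 2.7182818286 := Real.exp_one_lt_d9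
      _ < 3 := by norm_num
  set A : ℝ := 8 + 8*D + Real.exp 2 with hA
  have hA0 : 0 ≤ A := by positivity
  refine ⟨A / L₀ + 8, fun k hk => ?_⟩
  have hk0 : (0:ℝ) < k := by positivity
  have hk3 : (3:ℝ) ≤ k := by exact_mod_cast hk
  set L : ℝ := Real.log (Real.log k) with hLdef
  have hL : L₀ ≤ L := by
    apply Real.log_le_log (Real.log_pos (by norm_num))
    exact Real.log_le_log (by norm_num) hk3
  have hLpos : 0 < L := lt_of_lt_of_le hL₀pos hL
  set M : ℝ := ∑ p ∈ Nat.primesBelow (k+1), (1:ℝ)/p with hM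
  have hM0 : 0 ≤ M := Finset.sum_nonneg (fun p _ => by positivity)
  set T : ℝ := 2*k*M + Real.exp 2 with hT
  -- Step 1 : log (mu' k) ≤ T
  have step1 : Real.log (mu' k) ≤ T := by
    set f : Nat.Primes → ℝ := fun p =>
      1 - 1/((p:ℕ):ℝ) + (1/((p:ℕ):ℝ)) * (1 - 1/((p:ℕ):ℝ)) ^ (-(k:ℤ)) with hf
    have hp2 : ∀ p : Nat.Primes, (2:ℝ) ≤ ((p:ℕ):ℝ) := by
      intro p; exact_mod_cast p.2.two_le
    have hx0 : ∀ p : Nat.Primes, (0:ℝ) < 1/((p:ℕ):ℝ) := by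
      intro p
      have := hp2 p
      positivity
    have hx2 : ∀ p : Nat.Primes, 1/((p:ℕ):ℝ) ≤ 1/2 := by
      intro p
      exact one_div_le_one_div_of_le (by norm_num) (hp2 p)
    set g : Nat.Primes → ℝ := fun p =>
      if (p:ℕ) ≤ k then 2*k*(1/((p:ℕ):ℝ)) else Real.exp 2 * k * (1/((p:ℕ):ℝ))^2 with hg
    have hfg : ∀ p : Nat.Primes, f p ≤ Real.exp (g p) := by
      intro p
      by_cases hpk : (p:ℕ) ≤ k
      · simp only [hf, hg, if_pos hpk]
        simpa using factor_le_exp k (hx0 p) (hx2 p)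
      · have hkp : (k:ℝ) * (1/((p:ℕ):ℝ)) ≤ 1 := by
          push_neg at hpk
          have h1 : (k:ℝ) ≤ ((p:ℕ):ℝ) := by exact_mod_cast hpk.le
          have h2 : (0:ℝ) < ((p:ℕ):ℝ) := by linarith [hp2 p]
          rw [mul_one_div, div_le_one h2]
          exact h1
        simp only [hf, hg, if_neg hpk]
        simpa using factor_le_exp' k (hx0 p) (hx2 p) hkp
    have hprod : ∀ s : Finset Nat.Primes, ∏ p ∈ s, f p ≤ Real.exp T := by
      intro s
      have h1 : ∏ p ∈ s, f p ≤ ∏ p ∈ s, Real.exp (g p) := by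
        apply Finset.prod_le_prod
        · intro p _
          have h := hx0 p
          have h2 := hx2 p
          have : (0:ℝ) < 1 - 1/((p:ℕ):ℝ) := by linarith
          have : (0:ℝ) < (1 - 1/((p:ℕ):ℝ)) ^ (-(k:ℤ)) := zpow_pos this _
          simp only [hf]
          nlinarith [hx0 p, hx2 p]
        · intro p _
          exact hfg p
      rw [← Real.exp_sum] at h1
      refine h1.trans (Real.exp_le_exp.mpr ?_)
      -- ∑ g ≤ T
      rw [← Finset.sum_filter_add_sum_filter_not s (fun p : Nat.Primes => (p:ℕ) ≤ k)]
      have hs1 : ∑ p ∈ s.filter (fun p : Nat.Primes => (p:ℕ) ≤ k), g p ≤ 2*k*M := by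
        have he : ∀ p ∈ s.filter (fun p : Nat.Primes => (p:ℕ) ≤ k), g p = 2*k*(1/((p:ℕ):ℝ)) := by
          intro p hp
          simp only [hg, if_pos (Finset.mem_filter.mp hp).2]
        rw [Finset.sum_congr rfl he, ← Finset.mul_sum]
        apply mul_le_mul_of_nonneg_left _ (by positivity)
        have himg : ∑ p ∈ s.filter (fun p : Nat.Primes => (p:ℕ) ≤ k), (1:ℝ)/((p:ℕ):ℝ) =
            ∑ n ∈ (s.filter (fun p : Nat.Primes => (p:ℕ) ≤ k)).image
              (fun p : Nat.Primes => (p:ℕ)), (1:ℝ)/(n:ℝ) :=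
          (Finset.sum_image (f := fun n : ℕ => (1:ℝ)/(n:ℝ)) (g := fun p : Nat.Primes => (p:ℕ))
            (fun p _ q _ h => Subtype.ext (by simpa using h))).symm
        rw [himg, hM]
        apply Finset.sum_le_sum_of_subset_of_nonneg
        · intro n hn
          rcases Finset.mem_image.mp hn with ⟨p, hp, rfl⟩
          rcases Finset.mem_filter.mp hp with ⟨_, hpk⟩
          exact Nat.mem_primesBelow.mpr ⟨Nat.lt_succ_of_le hpk, p.2⟩
        · intro n _ _
          positivity
      have hs2 : ∑ p ∈ s.filter (fun p : Nat.Primes => ¬ (p:ℕ) ≤ k), g p ≤ Real.exp 2 := by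
        have he : ∀ p ∈ s.filter (fun p : Nat.Primes => ¬ (p:ℕ) ≤ k),
            g p = Real.exp 2 * k * (1/((p:ℕ):ℝ))^2 := by
          intro p hp
          simp only [hg, if_neg (Finset.mem_filter.mp hp).2]
        rw [Finset.sum_congr rfl he, ← Finset.mul_sum]
        have hsum : ∑ p ∈ s.filter (fun p : Nat.Primes => ¬ (p:ℕ) ≤ k), (1/((p:ℕ):ℝ))^2 ≤ ((k:ℝ))⁻¹ := by
          set s₂ := s.filter (fun p : Nat.Primes => ¬ (p:ℕ) ≤ k) with hs₂
          set N : ℕ := max k ((s₂.image (fun p : Nat.Primes => (p:ℕ))).sup id) with hN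
          calc ∑ p ∈ s₂, (1/((p:ℕ):ℝ))^2
              = ∑ n ∈ s₂.image (fun p : Nat.Primes => (p:ℕ)), (1/(n:ℝ))^2 :=
                (Finset.sum_image (f := fun n : ℕ => (1/(n:ℝ))^2)
                  (g := fun p : Nat.Primes => (p:ℕ))
                  (fun p _ q _ h => Subtype.ext (by simpa using h))).symm
            _ = ∑ n ∈ s₂.image (fun p : Nat.Primes => (p:ℕ)), ((n:ℝ)^2)⁻¹ :=
                Finset.sum_congr rfl (fun n _ => by rw [one_div_pow, one_div])
            _ ≤ ∑ n ∈ Finset.Ioc k N, ((n:ℝ)^2)⁻¹ := by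
                apply Finset.sum_le_sum_of_subset_of_nonneg
                · intro n hn
                  rcases Finset.mem_image.mp hn with ⟨p, hp, rfl⟩
                  have h1 : k < (p:ℕ) := not_le.mp (Finset.mem_filter.mp hp).2
                  refine Finset.mem_Ioc.mpr ⟨h1, le_max_of_le_right ?_⟩
                  exact Finset.le_sup (f := id) (Finset.mem_image_of_mem _ hp)
                · intro n _ _
                  positivity
            _ ≤ ((k:ℝ))⁻¹ - ((N:ℝ))⁻¹ :=
                sum_Ioc_inv_sq_le_sub (by omega) (le_max_left _ _)
            _ ≤ ((k:ℝ))⁻¹ := by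
                have : (0:ℝ) ≤ ((N:ℝ))⁻¹ := by positivity
                linarith
        calc Real.exp 2 * k * ∑ p ∈ s.filter (fun p : Nat.Primes => ¬ (p:ℕ) ≤ k), (1/((p:ℕ):ℝ))^2
            ≤ Real.exp 2 * k * ((k:ℝ))⁻¹ :=
              mul_le_mul_of_nonneg_left hsum (by positivity)
          _ = Real.exp 2 := by
              field_simp
      linarith
    have hmueq : mu' k = ∏' p : Nat.Primes, f p := rfl
    have hone : ∀ p : Nat.Primes, (1:ℝ) ≤ f p := by
      intro p
      have h := hx0 p
      have h2 := hx2 p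
      have hy : (0:ℝ) < 1 - 1/((p:ℕ):ℝ) := by linarith
      have hy1 : 1 - 1/((p:ℕ):ℝ) ≤ 1 := by linarith
      have hA1 : (1:ℝ) ≤ (1 - 1/((p:ℕ):ℝ)) ^ (-(k:ℤ)) := by
        rw [zpow_neg_eq hy.ne' k]
        exact (one_le_inv₀ (by positivity)).mpr (pow_le_one₀ hy.le hy1)
      simp only [hf]
      nlinarith
    have hT0 : (0:ℝ) ≤ T := by
      rw [hT]
      nlinarith [Real.exp_pos 2, hM0, hk0]
    by_cases hmul : Multipliable f
    · have hmu_le : mu' k ≤ Real.exp T := by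
        rw [hmueq]
        exact hasProd_le_of_prod_le hmul.hasProd hprod
      have hmu_ge : (1:ℝ) ≤ mu' k := by
        rw [hmueq]
        refine le_hasProd_of_le_prod hmul.hasProd (fun s => ?_)
        calc (1:ℝ) = ∏ _p ∈ s, (1:ℝ) := (Finset.prod_const_one).symm
          _ ≤ ∏ p ∈ s, f p :=
            Finset.prod_le_prod (fun _ _ => zero_le_one) (fun p _ => hone p)
      rw [Real.log_le_iff_le_exp (by linarith)]
      exact hmu_le
    · rw [hmueq, tprod_eq_one_of_not_multipliable hmul, Real.log_one]
      exact hT0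
  -- Step 2 : T ≤ (A/L₀ + 8) * k * L
  refine step1.trans ?_
  set J : ℕ := Nat.log 2 k with hJ
  have hJ1 : 1 ≤ J := Nat.log_pos one_lt_two (by omega)
  have hJ1' : (1:ℝ) ≤ J := by exact_mod_cast hJ1
  have hlog2 : (0:ℝ) < Real.log 2 := Real.log_pos (by norm_num)
  have hJle : (J:ℝ) ≤ Real.log k / Real.log 2 := by
    rw [le_div_iff₀ hlog2]
    have h2J : ((2:ℕ)^J : ℝ) ≤ (k:ℝ) := by
      exact_mod_cast Nat.pow_log_le_self 2 (by omega : k ≠ 0)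
    calc (J:ℝ) * Real.log 2 = Real.log ((2:ℝ)^J) := by
          rw [Real.log_pow]
      _ ≤ Real.log k := Real.log_le_log (by positivity) (by push_cast at h2J ⊢; linarith)
  have hlogJ : Real.log J ≤ L + D := by
    calc Real.log J ≤ Real.log (Real.log k / Real.log 2) :=
          Real.log_le_log (by linarith) hJle
      _ = Real.log (Real.log k) - Real.log (Real.log 2) :=
          Real.log_div (Real.log_pos (by linarith)).ne' hlog2.ne'
      _ = L + D := by rw [hLdef, hD]; ring
  have hMle : M ≤ 4 * (1 + (L + D)) := by
    calc M ≤ 4 * (1 + Real.log J) := mertens_le k (by omega)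
      _ ≤ 4 * (1 + (L + D)) := by linarith
  have hTle : T ≤ A * k + 8 * k * L := by
    have h1 : 2*k*M ≤ 2*(k:ℝ)*(4*(1+(L+D))) :=
      mul_le_mul_of_nonneg_left hMle (by positivity)
    have h2 : Real.exp 2 ≤ Real.exp 2 * k := by
      nlinarith [Real.exp_pos 2]
    rw [hT, hA]
    nlinarith [Real.exp_pos 2]
  refine hTle.trans ?_
  have h3 : A * k ≤ (A/L₀) * k * L := by
    rw [div_mul_eq_mul_div, div_mul_eq_mul_div, le_div_iff₀ hL₀pos]
    exact mul_le_mul_of_nonneg_left hL (by positivity)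
  calc A * k + 8 * k * L ≤ (A/L₀) * k * L + 8 * k * L := by linarith
    _ = (A/L₀ + 8) * k * L := by ring
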